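/- Let f : ZMod 4 → Fin 3 be a cyclic word containing the colors b and p each exactly twice and the color r not at all. Then f can be extended, by inserting two new elements of color r (at arbitrary, not necessarily adjacent, gaps), to a cyclic word of length 6 satisfying the K3-constraint if and only if the colors b and p alternate in f, i.e., f(i+2) = f(i) for all i in ZMod 4. -/
import Mathlib


namespace SATR

def red : Fin 3 := 0
def blue : Fin 3 := 1
def purple : Fin 3 := 2

/-- `x` lies strictly inside the cyclic arc from `a` to `c` (in the `+1` direction). -/
def arcBetween {n : ℕ} [NeZero n] (a x c : ZMod n) : Prop :=
  0 < (x - a).val ∧ (x - a).val < (c - a).val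

/-- Colors `c` and `c'` alternate in the cyclic word `f`: there are two positions of
color `c` such that each of the two open cyclic arcs they determine contains a
position of color `c'`. -/
def Alternates {n : ℕ} [NeZero n] (f : ZMod n → Fin 3) (c c' : Fin 3) : Prop :=
  ∃ i1 i2 j1 j2 : ZMod n, f i1 = c ∧ f i2 = c ∧ i1 ≠ i2 ∧
    f j1 = c' ∧ f j2 = c' ∧ arcBetween i1 j1 i2 ∧ arcBetween i2 j2 i1

/-- The K3-constraint: all three pairs of distinct colors alternate. -/
def K3Constraint (w : ZMod 6 → Fin 3) : Prop :=
  Alternates w red blue ∧ Alternates w red purple ∧ Alternates w blue purple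

/-- The P3-constraint: r–p and b–p alternate, r–b do not. -/
def P3Constraint (w : ZMod 6 → Fin 3) : Prop :=
  Alternates w red purple ∧ Alternates w blue purple ∧ ¬ Alternates w red blue

/-- Number of occurrences of color `c` in the cyclic word `f`. -/
def count {n : ℕ} [NeZero n] (f : ZMod n → Fin 3) (c : Fin 3) : ℕ :=
  (Finset.univ.filter fun i => f i = c).card

/-- Insert a new element of color `c` into the gap right after position `g`. -/
def insertAt {n : ℕ} [NeZero n] (f : ZMod n → Fin 3) (g : ZMod n) (c : Fin 3) :
    ZMod (n + 1) → Fin 3 :=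
  fun j =>
    if j.val = g.val + 1 then c
    else if j.val ≤ g.val then f (j.val : ZMod n)
    else f ((j.val - 1 : ℕ) : ZMod n)

/-- Insert `c1` right after position `g`, and `c2` immediately (cyclically) after `c1`,
so the two new elements are cyclically consecutive. -/
def insertPair {n : ℕ} [NeZero n] (f : ZMod n → Fin 3) (g : ZMod n) (c1 c2 : Fin 3) :
    ZMod (n + 2) → Fin 3 :=
  insertAt (insertAt f g c1) ((g.val + 1 : ℕ) : ZMod (n + 1)) c2

/-- The cyclic distance between two positions: the minimum of the two arc lengths. -/
def cycDist {n : ℕ} [NeZero n] (i j : ZMod n) : ℕ :=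
  min (j - i).val (i - j).val

/-- The K3^{-r,r}-constraint: a length-4 cyclic word with two blues and two purples
(and no red) can be extended to a K3-satisfying length-6 word by inserting two new
reds at arbitrary gaps iff blue and purple alternate, i.e. `f (i+2) = f i`. -/
instance {n : ℕ} [NeZero n] (a x c : ZMod n) : Decidable (arcBetween a x c) := by
  unfold arcBetween; infer_instance

def elems6 : List (ZMod 6) := List.finRange 6

lemma mem_elems6 (x : ZMod 6) : x ∈ elems6 := List.mem_finRange x

instance (f : ZMod 6 → Fin 3) (c c' : Fin 3) : Decidable (Alternates f c c') :=
  decidable_of_iff (∃ i1 ∈ elems6.filter (fun i => f i = c),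
      ∃ i2 ∈ elems6.filter (fun i => f i = c),
      ∃ j1 ∈ elems6.filter (fun j => f j = c'),
      ∃ j2 ∈ elems6.filter (fun j => f j = c'),
      i1 ≠ i2 ∧ arcBetween i1 j1 i2 ∧ arcBetween i2 j2 i1) (by
    unfold Alternates
    simp only [List.mem_filter, mem_elems6, true_and, decide_eq_true_eq]
    constructor
    · rintro ⟨i1, h1, i2, h2, j1, h3, j2, h4, hne, ha, hb2⟩
      exact ⟨i1, i2, j1, j2, h1, h2, hne, h3, h4, ha, hb2⟩
    · rintro ⟨i1, i2, j1, j2, h1, h2, hne, h3, h4, ha, hb2⟩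
      exact ⟨i1, h1, i2, h2, j1, h3, j2, h4, hne, ha, hb2⟩)

instance (w : ZMod 6 → Fin 3) : Decidable (K3Constraint w) := by
  unfold K3Constraint; infer_instance

set_option maxRecDepth 100000 in
set_option maxHeartbeats 4000000 in
theorem k3_minus_r_r_iff_alternating
    (f : ZMod 4 → Fin 3)
    (hb : count f blue = 2) (hp : count f purple = 2) (hr : count f red = 0) :
    (∃ (g1 : ZMod 4) (g2 : ZMod 5),
        K3Constraint (insertAt (insertAt f g1 red) g2 red)) ↔
      (∀ i : ZMod 4, f (i + 2) = f i) := by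
  revert hb hp hr; revert f
  decide

end SATR
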